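/- For β ∈ ℕ (β ≥ 1) let S_β be the piecewise-linear firing rate S_β(x) = 1 for x > 1/β, S_β(x) = 1/2 + (βx)/2 for -1/β ≤ x ≤ 1/β, S_β(x) = 0 for x < -1/β, and define the shifted firing rates S̄_β(x) = S_β(x + (-1)^β/(2β)). Then the sequence (S̄_β) satisfies Assumption A, and S̄_β(x) converges as β → ∞ to the Heaviside function H(x) for every x ≠ 0, while S̄_β(0) = 3/4 when β is even and S̄_β(0) = 1/4 when β is odd. -/

import Mathlib

open Set Finset Filter MeasureTheory

/-- The Heaviside function with `H 0 = 1/2`. -/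
noncomputable def Heaviside (x : ℝ) : ℝ :=
  if x < 0 then 0 else if x = 0 then 1/2 else 1

/-- The piecewise linear firing rate function with slope `β/2` (see (20) in the paper). -/
noncomputable def Spl (β : ℕ) (x : ℝ) : ℝ :=
  if 1 / (β : ℝ) < x then 1
  else if x < -(1 / (β : ℝ)) then 0
  else 1/2 + (β : ℝ) * x / 2

/-- The shifted firing rate functions `S̄_β(x) = S_β(x + (-1)^β/(2β))`. -/
noncomputable def SplBar (β : ℕ) (x : ℝ) : ℝ :=
  Spl β (x + (-1 : ℝ) ^ β / (2 * (β : ℝ)))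

lemma spl_eq (β : ℕ) (hβ : 1 ≤ β) (x : ℝ) :
    Spl β x = max 0 (min 1 (1/2 + (β : ℝ) * x / 2)) := by
  have hb : (0:ℝ) < β := by exact_mod_cast hβ
  unfold Spl
  split_ifs with h1 h2
  · have h : (1:ℝ) < 1/2 + (β:ℝ) * x / 2 := by
      have : (1:ℝ) < β * x := by
        have := (div_lt_iff₀ hb).mp (by linarith [h1] : 1 / (β:ℝ) < x)
        linarith
      linarith
    rw [min_eq_left h.le, max_eq_right (by norm_num)]
  · have hneg : -(1/(β:ℝ)) = -1/(β:ℝ) := by ring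
    rw [hneg] at h2
    have h : 1/2 + (β:ℝ) * x / 2 < 0 := by
      have : (β:ℝ) * x < -1 := by
        have := (lt_div_iff₀ hb).mp h2
        linarith
      linarith
    rw [min_eq_right (by linarith), max_eq_left h.le]
  · push_neg at h1 h2
    have hx1 : (β:ℝ) * x ≤ 1 := by
      have := (le_div_iff₀ hb).mp h1; linarith
    have hx2 : (-1:ℝ) ≤ (β:ℝ) * x := by
      have hneg : -(1/(β:ℝ)) = -1/(β:ℝ) := by ring
      rw [hneg] at h2
      have := (div_le_iff₀ hb).mp h2
      linarith
    rw [min_eq_right (by linarith), max_eq_right (by linarith)]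

lemma spl_zero (β : ℕ) (x : ℝ) (h : x < -(1 / (β:ℝ))) : Spl β x = 0 := by
  unfold Spl
  have hpos : (0:ℝ) ≤ 1/(β:ℝ) := by positivity
  rw [if_neg (by push_neg; linarith), if_pos h]

lemma spl_one (β : ℕ) (x : ℝ) (h : 1 / (β:ℝ) < x) : Spl β x = 1 := by
  unfold Spl; rw [if_pos h]

theorem stmt_16 :
    -- Assumption A for the shifted sequence
    (∀ β : ℕ, 1 ≤ β → ∃ K : NNReal, LipschitzWith K (SplBar β)) ∧
    (∀ β : ℕ, 1 ≤ β → ∀ x : ℝ, SplBar β x ∈ Set.Icc (0:ℝ) 1) ∧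
    (∀ ε > (0:ℝ), ∀ δ > (0:ℝ), ∃ Q : ℕ, ∀ β : ℕ, β > Q →
      (∀ x < -δ, |SplBar β x| < ε) ∧ (∀ x > δ, |1 - SplBar β x| < ε)) ∧
    -- pointwise convergence to the Heaviside function away from 0
    (∀ x : ℝ, x ≠ 0 →
      Filter.Tendsto (fun β => SplBar β x) Filter.atTop (nhds (Heaviside x))) ∧
    -- values at the threshold
    (∀ β : ℕ, 1 ≤ β → Even β → SplBar β 0 = 3/4) ∧
    (∀ β : ℕ, 1 ≤ β → Odd β → SplBar β 0 = 1/4) := by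
  -- key: SplBar β is eventually constant away from 0
  have key : ∀ β : ℕ, 1 ≤ β → ∀ x : ℝ, 3 / (2 * (β:ℝ)) < |x| →
      SplBar β x = Heaviside x := by
    intro β hβ x hx
    have hb : (0:ℝ) < β := by exact_mod_cast hβ
    have hs : |(-1:ℝ) ^ β / (2 * (β:ℝ))| ≤ 1 / (2 * (β:ℝ)) := by
      rw [abs_div]
      simp [abs_pow, abs_of_pos (by positivity : (0:ℝ) < 2 * (β:ℝ))]
    have hs' := abs_le.mp hs
    unfold SplBar Heaviside
    rcases lt_trichotomy x 0 with hx0 | hx0 | hx0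
    · rw [if_pos hx0]
      apply spl_zero
      have : |x| = -x := abs_of_neg hx0
      rw [this] at hx
      have h1 : 1/(β:ℝ) = 2/(2*(β:ℝ)) := by field_simp
      rw [h1]
      have : x + (-1:ℝ) ^ β / (2 * (β:ℝ)) < -(3/(2*(β:ℝ))) + 1/(2*(β:ℝ)) := by
        linarith [hs'.2]
      calc x + (-1:ℝ) ^ β / (2 * (β:ℝ)) < -(3/(2*(β:ℝ))) + 1/(2*(β:ℝ)) := this
        _ = -(2/(2*(β:ℝ))) := by ring
    · subst hx0; simp at hx
      exact absurd hx (by positivity : (0:ℝ) ≤ 3/(2*(β:ℝ))).not_gt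
    · rw [if_neg (by linarith), if_neg hx0.ne']
      apply spl_one
      have : |x| = x := abs_of_pos hx0
      rw [this] at hx
      have h1 : 1/(β:ℝ) = 2/(2*(β:ℝ)) := by field_simp
      rw [h1]
      calc (2:ℝ)/(2*(β:ℝ)) = 3/(2*(β:ℝ)) - 1/(2*(β:ℝ)) := by ring
        _ < x + (-1:ℝ) ^ β / (2 * (β:ℝ)) := by linarith [hs'.1]
  refine ⟨?_, ?_, ?_, ?_, ?_, ?_⟩
  · -- Lipschitz
    intro β hβ
    refine ⟨β, ?_⟩
    have haff : LipschitzWith β (fun x : ℝ => 1/2 + (β:ℝ) * x / 2) := by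
      apply LipschitzWith.of_dist_le_mul
      intro x y
      rw [Real.dist_eq, Real.dist_eq]
      have : (1/2 + (β:ℝ) * x / 2) - (1/2 + (β:ℝ) * y / 2) = (β:ℝ) * (x - y) / 2 := by ring
      rw [this, abs_div, abs_mul]
      have hb : (0:ℝ) ≤ (β:ℝ) := Nat.cast_nonneg β
      simp only [abs_of_nonneg hb, abs_two]
      have h2 : (β:ℝ) * |x - y| / 2 ≤ (β:ℝ) * |x - y| := by
        have : (0:ℝ) ≤ (β:ℝ) * |x - y| := by positivity
        linarith
      simpa using h2
    have hmax : LipschitzWith β (fun x : ℝ => max 0 (min 1 (1/2 + (β:ℝ) * x / 2))) := by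
      simpa [max_comm, min_comm] using (haff.min_const 1).max_const 0
    have : LipschitzWith β (Spl β) := by
      have := hmax
      apply LipschitzWith.of_dist_le_mul
      intro x y
      rw [spl_eq β hβ x, spl_eq β hβ y]
      exact hmax.dist_le_mul x y
    have htr : LipschitzWith 1 (fun x : ℝ => x + (-1:ℝ) ^ β / (2 * (β:ℝ))) := by
      apply LipschitzWith.of_dist_le_mul
      intro x y
      simp [Real.dist_eq]
    have hc : LipschitzWith (β * 1) (SplBar β) := this.comp htr
    simpa using hc
  · -- range in [0,1]
    intro β hβ x
    unfold SplBar
    rw [spl_eq β hβ]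
    constructor
    · exact le_max_left 0 _
    · exact max_le (by norm_num) (min_le_left _ _)
  · -- eps-delta
    intro ε hε δ hδ
    refine ⟨⌈3 / (2*δ)⌉₊ + 1, ?_⟩
    intro β hβ
    have hβ1 : 1 ≤ β := le_trans (Nat.le_add_left 1 _) hβ
    have hb : (0:ℝ) < β := by exact_mod_cast hβ1
    have hBig : 3 / (2*δ) < (β:ℝ) := by
      have h1 : (⌈3 / (2*δ)⌉₊ : ℝ) < β := by
        have : ⌈3 / (2*δ)⌉₊ < β := by omega
        exact_mod_cast this
      exact lt_of_le_of_lt (Nat.le_ceil _) h1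
    have hδβ : 3 / (2 * (β:ℝ)) < δ := by
      rw [div_lt_iff₀ (by positivity)]
      rw [div_lt_iff₀ (by positivity)] at hBig
      linarith
    constructor
    · intro x hx
      have : SplBar β x = Heaviside x := by
        apply key β hβ1
        rw [abs_of_neg (by linarith : x < 0)]
        linarith
      rw [this]
      unfold Heaviside
      rw [if_pos (by linarith : x < 0)]
      simpa using hε
    · intro x hx
      have : SplBar β x = Heaviside x := by
        apply key β hβ1
        rw [abs_of_pos (by linarith : 0 < x)]
        linarith
      rw [this]
      unfold Heaviside
      rw [if_neg (by linarith : ¬ x < 0), if_neg (by linarith : x ≠ 0)]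
      simpa using hε
  · -- tendsto
    intro x hx
    apply Filter.Tendsto.congr' _ tendsto_const_nhds
    have hax : 0 < |x| := abs_pos.mpr hx
    rw [Filter.EventuallyEq, Filter.eventually_atTop]
    refine ⟨⌈3 / (2*|x|)⌉₊ + 1, ?_⟩
    intro β hβ
    have hβ1 : 1 ≤ β := le_trans (Nat.le_add_left 1 _) hβ
    have hBig : 3 / (2*|x|) < (β:ℝ) := by
      have h1 : (⌈3 / (2*|x|)⌉₊ : ℝ) < β := by
        have : ⌈3 / (2*|x|)⌉₊ < β := by omega
        exact_mod_cast this
      exact lt_of_le_of_lt (Nat.le_ceil _) h1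
    have : 3 / (2 * (β:ℝ)) < |x| := by
      have hb : (0:ℝ) < β := by exact_mod_cast hβ1
      rw [div_lt_iff₀ (by positivity)]
      rw [div_lt_iff₀ (by positivity)] at hBig
      linarith
    exact (key β hβ1 x this).symm
  · -- even
    intro β hβ hEven
    have hb : (0:ℝ) < β := by exact_mod_cast hβ
    unfold SplBar
    rw [hEven.neg_one_pow, zero_add, spl_eq β hβ]
    have : 1/2 + (β:ℝ) * (1 / (2 * (β:ℝ))) / 2 = 3/4 := by
      field_simp; ring
    rw [this]
    norm_num
  · -- odd
    intro β hβ hOdd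
    have hb : (0:ℝ) < β := by exact_mod_cast hβ
    unfold SplBar
    rw [hOdd.neg_one_pow, zero_add, spl_eq β hβ]
    have : 1/2 + (β:ℝ) * (-1 / (2 * (β:ℝ))) / 2 = 1/4 := by
      field_simp; ring
    rw [this]
    norm_num
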